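/- Let W ⊆ R^n be a subspace, c ≥ 0 and d ∈ R^n, and suppose the LP min ⟨c,x⟩ s.t. x ∈ W + d, x ≥ 0 is feasible and bounded. Then it has an optimal solution x with ‖x − d‖_∞ ≤ κ_W · ‖d_{Λ(d,c)}‖_1, where Λ(d,c) = supp(d^−) ∪ supp(c^+). -/

import Mathlib

open Finset

variable {ι : Type*} [Fintype ι] [DecidableEq ι]

/-- `y` conforms to `x` if `x i * y i > 0` whenever `y i ≠ 0`. -/
def Conforms (y x : ι → ℝ) : Prop := ∀ i, y i ≠ 0 → x i * y i > 0

/-- An elementary vector of `W`: a support-minimal nonzero vector of `W`. -/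
def IsElementary (W : Submodule ℝ (ι → ℝ)) (g : ι → ℝ) : Prop :=
  g ∈ W ∧ g ≠ 0 ∧
    ∀ h ∈ W, h ≠ 0 → {i | h i ≠ 0} ⊆ {i | g i ≠ 0} → {i | h i ≠ 0} = {i | g i ≠ 0}

/-- The fractional circuit imbalance measure `κ_W`. -/
noncomputable def kappa (W : Submodule ℝ (ι → ℝ)) : ℝ :=
  sSup ({1} ∪ {t : ℝ | ∃ g : ι → ℝ, IsElementary W g ∧
    ∃ i j, g i ≠ 0 ∧ g j ≠ 0 ∧ t = |g j| / |g i|})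

/-- An integer elementary vector, normalized so that the gcd of its entries is 1. -/
def IsIntElementary (W : Submodule ℝ (ι → ℝ)) (g : ι → ℤ) : Prop :=
  IsElementary W (fun i => (g i : ℝ)) ∧ Finset.univ.gcd (fun i => (g i).natAbs) = 1

/-- The max-circuit imbalance measure `κ̄_W`. -/
noncomputable def barKappa (W : Submodule ℝ (ι → ℝ)) : ℕ :=
  sSup {k : ℕ | ∃ g : ι → ℤ, IsIntElementary W g ∧
    k = Finset.univ.sup fun i => (g i).natAbs}

/-- The lcm-circuit imbalance measure `κ̇_W`: the least positive integer divisible by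
every entry of every normalized integer elementary vector. -/
noncomputable def dotKappa (W : Submodule ℝ (ι → ℝ)) : ℕ :=
  sInf {k : ℕ | 0 < k ∧ ∀ g : ι → ℤ, IsIntElementary W g → ∀ i, g i ≠ 0 → (g i).natAbs ∣ k}

/-- A rational linear subspace: one spanned by rational vectors. -/
def IsRationalSubspace (W : Submodule ℝ (ι → ℝ)) : Prop :=
  ∃ S : Set (ι → ℚ), W = Submodule.span ℝ ((fun v : ι → ℚ => fun i => ((v i : ℝ))) '' S)

/-- The orthogonal complement of `W` in `ℝ^ι` with the standard inner product. -/
def orthComp (W : Submodule ℝ (ι → ℝ)) : Submodule ℝ (ι → ℝ) where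
  carrier := {v | ∀ w ∈ W, ∑ i, v i * w i = 0}
  add_mem' := by
    intro a b ha hb w hw
    have := ha w hw
    have := hb w hw
    simp only [Set.mem_setOf_eq, Pi.add_apply, add_mul, Finset.sum_add_distrib, *]
    ring
  zero_mem' := by intro w hw; simp
  smul_mem' := by
    intro c a ha w hw
    have h := ha w hw
    simp only [Set.mem_setOf_eq, Pi.smul_apply, smul_eq_mul, mul_assoc, ← Finset.mul_sum, h,
      mul_zero]

section Helpers

variable {n : ℕ}

lemma sign_trans {a b c : ℝ} (h1 : 0 < a * b) (h2 : 0 < b * c) : 0 < a * c := by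
  have hb : b ≠ 0 := fun h => by simp [h] at h1
  nlinarith [mul_pos h1 h2, mul_self_pos.2 hb]

lemma conforms_self (z : Fin n → ℝ) : Conforms z z := fun i h => mul_self_pos.2 h

lemma conforms_trans {p z' z : Fin n → ℝ} (h1 : Conforms p z') (h2 : Conforms z' z) :
    Conforms p z := by
  intro i hi
  exact sign_trans (h2 i (by rintro h; exact absurd (h1 i hi) (by simp [h]))) (h1 i hi)

lemma isElementary_smul {W : Submodule ℝ (Fin n → ℝ)} {g : Fin n → ℝ} (hg : IsElementary W g)
    {t : ℝ} (ht : t ≠ 0) : IsElementary W (t • g) := by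
  obtain ⟨hgW, hg0, hmin⟩ := hg
  have hsupp : {i | (t • g) i ≠ 0} = {i | g i ≠ 0} := by
    ext i; simp [Pi.smul_apply, smul_eq_mul, mul_ne_zero_iff, ht]
  refine ⟨W.smul_mem t hgW, ?_, ?_⟩
  · intro h
    apply hg0
    ext i
    have := congrFun h i
    simp only [Pi.smul_apply, smul_eq_mul, Pi.zero_apply] at this ⊢
    rcases mul_eq_zero.1 this with h' | h'
    · exact absurd h' ht
    · exact h'
  · intro h hW h0 hsub
    rw [hsupp] at hsub ⊢
    exact hmin h hW h0 hsub

lemma elementary_proportional {W : Submodule ℝ (Fin n → ℝ)} {g h : Fin n → ℝ}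
    (hg : IsElementary W g) (hh : IsElementary W h)
    (hsupp : {i | g i ≠ 0} = {i | h i ≠ 0}) : ∃ c : ℝ, c ≠ 0 ∧ g = c • h := by
  obtain ⟨i₀, hi₀⟩ := Function.ne_iff.1 hg.2.1
  have hgi₀ : g i₀ ≠ 0 := hi₀
  have hhi₀ : h i₀ ≠ 0 := by
    have : i₀ ∈ {i | h i ≠ 0} := hsupp ▸ (show i₀ ∈ {i | g i ≠ 0} from hgi₀)
    exact this
  set c := g i₀ / h i₀ with hc
  have hc0 : c ≠ 0 := div_ne_zero hgi₀ hhi₀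
  refine ⟨c, hc0, ?_⟩
  set v := g - c • h with hv
  have hvW : v ∈ W := W.sub_mem hg.1 (W.smul_mem c hh.1)
  have hvi₀ : v i₀ = 0 := by
    simp only [hv, Pi.sub_apply, Pi.smul_apply, smul_eq_mul, hc]
    field_simp
    ring
  by_contra hne
  have hv0 : v ≠ 0 := by
    intro h0
    apply hne
    have := sub_eq_zero.1 h0
    exact this
  have hsubv : {i | v i ≠ 0} ⊆ {i | g i ≠ 0} := by
    intro i hi
    simp only [Set.mem_setOf_eq] at hi ⊢
    intro hgi
    apply hi
    have hhi : h i = 0 := by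
      by_contra hhi
      have : i ∈ {i | g i ≠ 0} := hsupp.symm ▸ (hhi : i ∈ {i | h i ≠ 0})
      exact this hgi
    simp [hv, hgi, hhi]
  have := hg.2.2 v hvW hv0 hsubv
  have : i₀ ∈ {i | v i ≠ 0} := this ▸ (hgi₀ : i₀ ∈ {i | g i ≠ 0})
  exact this hvi₀

end Helpers

section Kappa

variable {n : ℕ}

open Classical in
lemma kappa_bddAbove (W : Submodule ℝ (Fin n → ℝ)) :
    BddAbove ({1} ∪ {t : ℝ | ∃ g : Fin n → ℝ, IsElementary W g ∧
      ∃ i j, g i ≠ 0 ∧ g j ≠ 0 ∧ t = |g j| / |g i|}) := by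
  apply Set.Finite.bddAbove
  apply Set.Finite.union (Set.finite_singleton 1)
  set Φ : (Finset (Fin n) × Fin n × Fin n) → ℝ := fun q =>
    if h : ∃ g : Fin n → ℝ, IsElementary W g ∧
        (Finset.univ.filter fun i => g i ≠ 0) = q.1 ∧ g q.2.1 ≠ 0 ∧ g q.2.2 ≠ 0 then
      |h.choose q.2.2| / |h.choose q.2.1| else 0 with hΦ
  apply Set.Finite.subset (Set.finite_range Φ)
  rintro t ⟨g, hg, i, j, hi, hj, rfl⟩
  refine ⟨⟨Finset.univ.filter fun i => g i ≠ 0, i, j⟩, ?_⟩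
  have hex : ∃ g' : Fin n → ℝ, IsElementary W g' ∧
      (Finset.univ.filter fun i => g' i ≠ 0) = (Finset.univ.filter fun i => g i ≠ 0) ∧
      g' i ≠ 0 ∧ g' j ≠ 0 := ⟨g, hg, rfl, hi, hj⟩
  simp only [hΦ, dif_pos hex]
  obtain ⟨hg', hfil, hi', hj'⟩ := hex.choose_spec
  have hsupp : {i | hex.choose i ≠ 0} = {i | g i ≠ 0} := by
    ext k
    have := Finset.ext_iff.1 hfil k
    simpa using this
  obtain ⟨cc, hcc, hprop⟩ := elementary_proportional hg' hg hsupp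
  have h1 : hex.choose j = cc * g j := by rw [hprop]; rfl
  have h2 : hex.choose i = cc * g i := by rw [hprop]; rfl
  rw [h1, h2, abs_mul, abs_mul, mul_div_mul_left _ _ (abs_ne_zero.2 hcc)]

lemma one_le_kappa (W : Submodule ℝ (Fin n → ℝ)) : (1 : ℝ) ≤ kappa W :=
  le_csSup (kappa_bddAbove W) (Or.inl rfl)

lemma kappa_nonneg (W : Submodule ℝ (Fin n → ℝ)) : (0 : ℝ) ≤ kappa W :=
  le_trans zero_le_one (one_le_kappa W)

lemma abs_le_kappa_mul {W : Submodule ℝ (Fin n → ℝ)} {g : Fin n → ℝ}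
    (hg : IsElementary W g) {i j : Fin n} (hi : g i ≠ 0) (hj : g j ≠ 0) :
    |g j| ≤ kappa W * |g i| := by
  have ht : |g j| / |g i| ≤ kappa W :=
    le_csSup (kappa_bddAbove W) (Or.inr ⟨g, hg, i, j, hi, hj, rfl⟩)
  rwa [div_le_iff₀ (abs_pos.2 hi)] at ht

end Kappa

section Conform

variable {n : ℕ}

open Classical in
lemma exists_elem_conform {W : Submodule ℝ (Fin n → ℝ)} {z : Fin n → ℝ}
    (hz : z ∈ W) (hz0 : z ≠ 0) : ∃ w, IsElementary W w ∧ Conforms w z := by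
  set N : Set ℕ := {k | ∃ w, w ∈ W ∧ w ≠ 0 ∧ Conforms w z ∧
    (Finset.univ.filter fun i => w i ≠ 0).card = k} with hN
  have hNne : N.Nonempty := ⟨_, z, hz, hz0, conforms_self z, rfl⟩
  obtain ⟨w, hwW, hw0, hwc, hwcard⟩ := Nat.sInf_mem hNne
  refine ⟨w, ⟨hwW, hw0, ?_⟩, hwc⟩
  intro u huW hu0 husupp
  by_contra hne
  obtain ⟨istar, histar, histaru⟩ := Set.exists_of_ssubset
    (show {i | u i ≠ 0} ⊂ {i | w i ≠ 0} from
      ⟨husupp, fun hba => hne (Set.Subset.antisymm husupp hba)⟩)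
  have histaru : u istar = 0 := not_not.1 histaru
  obtain ⟨i₀, hi₀'⟩ := Function.ne_iff.1 hu0
  have hi₀ : u i₀ ≠ 0 := by simpa using hi₀'
  have hwi₀ : w i₀ ≠ 0 := husupp hi₀
  set u' : Fin n → ℝ := if 0 < w i₀ * u i₀ then u else -u with hu'
  have hu'W : u' ∈ W := by
    rw [hu']; split
    · exact huW
    · exact W.neg_mem huW
  have hu'supp : ∀ i, u' i ≠ 0 → w i ≠ 0 := by
    intro i hi
    apply husupp
    rw [hu'] at hi
    split at hi
    · exact hi
    · simpa using hi
  have hu'istar : u' istar = 0 := by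
    rw [hu']; split <;> simp [histaru]
  have h0 : 0 < w i₀ * u' i₀ := by
    by_cases h : 0 < w i₀ * u i₀
    · rw [hu', if_pos h]; exact h
    · rw [hu', if_neg h]
      push_neg at h
      have hne0 : w i₀ * u i₀ ≠ 0 := mul_ne_zero hwi₀ hi₀
      have : w i₀ * u i₀ < 0 := lt_of_le_of_ne h hne0
      simpa using this
  set F : Finset (Fin n) := Finset.univ.filter fun i => u' i ≠ 0 ∧ 0 < w i / u' i with hF
  have hi₀F : i₀ ∈ F := by
    have hu'i₀ : u' i₀ ≠ 0 := by
      intro h; rw [h, mul_zero] at h0; exact lt_irrefl 0 h0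
    have : 0 < w i₀ / u' i₀ := by
      rcases mul_pos_iff.1 h0 with ⟨h1, h2⟩ | ⟨h1, h2⟩
      · exact div_pos h1 h2
      · exact div_pos_of_neg_of_neg h1 h2
    simp [hF, hu'i₀, this]
  have hFne : F.Nonempty := ⟨i₀, hi₀F⟩
  set t := F.inf' hFne (fun i => w i / u' i) with htdef
  obtain ⟨i₁, hi₁F, hi₁⟩ := F.exists_mem_eq_inf' hFne (fun i => w i / u' i)
  have hi₁prop := (Finset.mem_filter.1 hi₁F).2
  have ht_pos : 0 < t := by rw [htdef, hi₁]; exact hi₁prop.2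
  set v : Fin n → ℝ := w - t • u' with hvdef
  have hvW : v ∈ W := W.sub_mem hwW (W.smul_mem t hu'W)
  have CP : ∀ i, v i = 0 ∨ (0 < w i * v i ∧ w i ≠ 0) := by
    intro i
    by_cases hui : u' i = 0
    · have hvi : v i = w i := by simp [hvdef, hui]
      by_cases hwi : w i = 0
      · left; rw [hvi, hwi]
      · right; exact ⟨by rw [hvi]; exact mul_self_pos.2 hwi, hwi⟩
    · have hwi : w i ≠ 0 := hu'supp i hui
      set r := w i / u' i with hr
      have hwir : w i = r * u' i := (div_mul_cancel₀ _ hui).symm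
      have hvi : v i = (r - t) * u' i := by
        simp only [hvdef, Pi.sub_apply, Pi.smul_apply, smul_eq_mul]
        rw [hwir]; ring
      have hr0 : r ≠ 0 := div_ne_zero hwi hui
      by_cases hrpos : 0 < r
      · have hiF : i ∈ F := by simp [hF, hui, hr ▸ hrpos]
        have htr : t ≤ r := Finset.inf'_le _ hiF
        rcases eq_or_lt_of_le htr with heq | hlt
        · left; rw [hvi, ← heq]; ring
        · right
          refine ⟨?_, hwi⟩
          have : w i * v i = (r * (r - t)) * (u' i * u' i) := by
            rw [hwir, hvi]; ring
          rw [this]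
          exact mul_pos (mul_pos hrpos (sub_pos.2 hlt)) (mul_self_pos.2 hui)
      · have hrneg : r < 0 := lt_of_le_of_ne (not_lt.1 hrpos) hr0
        right
        refine ⟨?_, hwi⟩
        have : w i * v i = (r * (r - t)) * (u' i * u' i) := by
          rw [hwir, hvi]; ring
        rw [this]
        exact mul_pos (mul_pos_of_neg_of_neg hrneg (by linarith)) (mul_self_pos.2 hui)
  have hvistar : v istar = w istar := by simp [hvdef, hu'istar]
  have hv0 : v ≠ 0 := by
    intro h
    have : v istar = 0 := by rw [h]; rfl
    rw [hvistar] at this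
    exact histar this
  have hvconf : Conforms v z := by
    intro i hvi
    rcases CP i with h | ⟨hwv, hwi⟩
    · exact absurd h hvi
    · exact sign_trans (hwc i hwi) hwv
  have hvi₁ : v i₁ = 0 := by
    have hu'i₁ : u' i₁ ≠ 0 := hi₁prop.1
    have : t = w i₁ / u' i₁ := hi₁
    simp only [hvdef, Pi.sub_apply, Pi.smul_apply, smul_eq_mul, this]
    rw [div_mul_cancel₀ _ hu'i₁]; ring
  have hwi₁ : w i₁ ≠ 0 := by
    intro h
    rw [h, zero_div] at hi₁prop
    exact lt_irrefl 0 hi₁prop.2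
  have hcard : (Finset.univ.filter fun i => v i ≠ 0).card <
      (Finset.univ.filter fun i => w i ≠ 0).card := by
    apply Finset.card_lt_card
    constructor
    · intro i hi
      simp only [Finset.mem_filter, Finset.mem_univ, true_and] at hi ⊢
      rcases CP i with h | ⟨_, hwi⟩
      · exact absurd h hi
      · exact hwi
    · intro hsub
      have : i₁ ∈ Finset.univ.filter fun i => v i ≠ 0 :=
        hsub (by simp [hwi₁])
      simp only [Finset.mem_filter] at this
      exact this.2 hvi₁
  have : sInf N ≤ (Finset.univ.filter fun i => v i ≠ 0).card :=
    Nat.sInf_le ⟨v, hvW, hv0, hvconf, rfl⟩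
  omega

end Conform

section Decomp

variable {n : ℕ}

open Classical in
lemma conformal_decomposition_aux (W : Submodule ℝ (Fin n → ℝ)) :
    ∀ (k : ℕ) (z : Fin n → ℝ), z ∈ W → (Finset.univ.filter fun i => z i ≠ 0).card = k →
      ∃ (m : ℕ) (h : Fin m → Fin n → ℝ),
        (∀ l, IsElementary W (h l) ∧ Conforms (h l) z) ∧ ∑ l, h l = z := by
  intro k
  induction k using Nat.strong_induction_on with
  | _ k IH =>
    intro z hz hcard
    by_cases hz0 : z = 0
    · refine ⟨0, fun l => l.elim0, fun l => l.elim0, ?_⟩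
      simp [hz0]
    · obtain ⟨w, hwel, hwc⟩ := exists_elem_conform hz hz0
      have hw0 := hwel.2.1
      obtain ⟨i₀', hi₀'⟩ := Function.ne_iff.1 hw0
      have hwi₀ : w i₀' ≠ 0 := by simpa using hi₀'
      set F : Finset (Fin n) := Finset.univ.filter fun i => w i ≠ 0 with hF
      have hFne : F.Nonempty := ⟨i₀', by simp [hF, hwi₀]⟩
      have hratio : ∀ i ∈ F, 0 < z i / w i := by
        intro i hi
        have hwi : w i ≠ 0 := (Finset.mem_filter.1 hi).2
        have := hwc i hwi
        rcases mul_pos_iff.1 this with ⟨h1, h2⟩ | ⟨h1, h2⟩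
        · exact div_pos h1 h2
        · exact div_pos_of_neg_of_neg h1 h2
      set t := F.inf' hFne (fun i => z i / w i) with htdef
      obtain ⟨i₁, hi₁F, hi₁⟩ := F.exists_mem_eq_inf' hFne (fun i => z i / w i)
      have ht_pos : 0 < t := by rw [htdef, hi₁]; exact hratio i₁ hi₁F
      set h₀ : Fin n → ℝ := t • w with hh₀
      have hh₀el : IsElementary W h₀ := isElementary_smul hwel (ne_of_gt ht_pos)
      have hh₀conf : Conforms h₀ z := by
        intro i hi
        have hwi : w i ≠ 0 := by
          intro h; apply hi; simp [hh₀, h]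
        have := hwc i hwi
        have : 0 < z i * (t * w i) := by nlinarith
        simpa [hh₀] using this
      set z' : Fin n → ℝ := z - h₀ with hz'
      have hz'W : z' ∈ W := W.sub_mem hz (W.smul_mem t hwel.1)
      have CP2 : ∀ i, z' i = 0 ∨ 0 < z i * z' i := by
        intro i
        by_cases hwi : w i = 0
        · have hzi : z' i = z i := by simp [hz', hh₀, hwi]
          by_cases hzz : z i = 0
          · left; rw [hzi, hzz]
          · right; rw [hzi]; exact mul_self_pos.2 hzz
        · have hiF : i ∈ F := by simp [hF, hwi]
          set r := z i / w i with hr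
          have hzir : z i = r * w i := (div_mul_cancel₀ _ hwi).symm
          have hz'i : z' i = (r - t) * w i := by
            simp only [hz', Pi.sub_apply, hh₀, Pi.smul_apply, smul_eq_mul]
            rw [hzir]; ring
          have htr : t ≤ r := Finset.inf'_le _ hiF
          rcases eq_or_lt_of_le htr with heq | hlt
          · left; rw [hz'i, ← heq]; ring
          · right
            have : z i * z' i = (r * (r - t)) * (w i * w i) := by
              rw [hzir, hz'i]; ring
            rw [this]
            exact mul_pos (mul_pos (hratio i hiF) (sub_pos.2 hlt)) (mul_self_pos.2 hwi)
      have hz'conf : Conforms z' z := by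
        intro i hi
        rcases CP2 i with h | h
        · exact absurd h hi
        · exact h
      have hz'i₁ : z' i₁ = 0 := by
        have hwi₁ : w i₁ ≠ 0 := (Finset.mem_filter.1 hi₁F).2
        simp only [hz', Pi.sub_apply, hh₀, Pi.smul_apply, smul_eq_mul, htdef, hi₁]
        rw [div_mul_cancel₀ _ hwi₁]; ring
      have hzi₁ : z i₁ ≠ 0 := by
        have hwi₁ : w i₁ ≠ 0 := (Finset.mem_filter.1 hi₁F).2
        have := hwc i₁ hwi₁
        intro h; rw [h, zero_mul] at this; exact lt_irrefl 0 this
      have hcard' : (Finset.univ.filter fun i => z' i ≠ 0).card < k := by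
        rw [← hcard]
        apply Finset.card_lt_card
        constructor
        · intro i hi
          simp only [Finset.mem_filter, Finset.mem_univ, true_and] at hi ⊢
          intro hzi
          rcases CP2 i with h | h
          · exact hi h
          · rw [hzi, zero_mul] at h; exact lt_irrefl 0 h
        · intro hsub
          have : i₁ ∈ Finset.univ.filter fun i => z' i ≠ 0 := hsub (by simp [hzi₁])
          simp only [Finset.mem_filter] at this
          exact this.2 hz'i₁
      obtain ⟨m, hs, hprops, hsum⟩ := IH _ hcard' z' hz'W rfl
      refine ⟨m + 1, Fin.cons h₀ hs, ?_, ?_⟩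
      · intro l
        refine Fin.cases ?_ ?_ l
        · exact ⟨hh₀el, hh₀conf⟩
        · intro l'
          simp only [Fin.cons_succ]
          exact ⟨(hprops l').1, conforms_trans (hprops l').2 hz'conf⟩
      · rw [Fin.sum_cons, hsum]
        simp [hz']

end Decomp

section AbsLemmas

lemma abs_sum_conformal {m : ℕ} (f : Fin m → ℝ) (a : ℝ)
    (hc : ∀ l, f l ≠ 0 → 0 < a * f l) (hs : ∑ l, f l = a) :
    ∑ l, |f l| = |a| := by
  rcases lt_trichotomy a 0 with ha | ha | ha
  · have : ∀ l, |f l| = -f l := by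
      intro l
      rcases eq_or_ne (f l) 0 with h | h
      · simp [h]
      · have := hc l h
        have : f l < 0 := by nlinarith
        exact abs_of_neg this
    rw [Finset.sum_congr rfl fun l _ => this l, abs_of_neg ha, ← hs]
    rw [← Finset.sum_neg_distrib]
  · have : ∀ l, f l = 0 := by
      intro l
      by_contra h
      have := hc l h
      rw [ha, zero_mul] at this
      exact lt_irrefl 0 this
    simp [this, ha]
  · have : ∀ l, |f l| = f l := by
      intro l
      rcases eq_or_ne (f l) 0 with h | h
      · simp [h]
      · have := hc l h
        have : 0 < f l := by nlinarith
        exact abs_of_pos this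
    rw [Finset.sum_congr rfl fun l _ => this l, abs_of_pos ha, hs]

lemma abs_sub_eps {zv hv ε : ℝ} (hconf : hv ≠ 0 → 0 < zv * hv) (hle : |hv| ≤ |zv|)
    (hε0 : 0 < ε) (hε1 : ε ≤ 1) : |zv - ε * hv| = |zv| - ε * |hv| := by
  rcases eq_or_ne hv 0 with h | h
  · simp [h]
  · have hs := hconf h
    rcases mul_pos_iff.1 hs with ⟨h1, h2⟩ | ⟨h1, h2⟩
    · rw [abs_of_pos h1, abs_of_pos h2] at hle ⊢
      rw [abs_of_nonneg (by nlinarith)]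
    · rw [abs_of_neg h1, abs_of_neg h2] at hle ⊢
      rw [abs_of_nonpos (by nlinarith)]
      ring

end AbsLemmas

section Pulling

variable {n : ℕ}

open Classical in
lemma pulling (W : Submodule ℝ (Fin n → ℝ)) (d c : Fin n → ℝ) (hc : ∀ i, 0 ≤ c i)
    (x : Fin n → ℝ) (hx : x - d ∈ W ∧ ∀ i, 0 ≤ x i) :
    ∃ y : Fin n → ℝ, (y - d ∈ W ∧ ∀ i, 0 ≤ y i) ∧
      (∑ i, c i * y i ≤ ∑ i, c i * x i) ∧
      ∀ i, |y i - d i| ≤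
        kappa W * ∑ i ∈ Finset.univ.filter (fun i => d i < 0 ∨ 0 < c i), |d i| := by
  classical
  set cost : (Fin n → ℝ) → ℝ := fun y => ∑ i, c i * y i with hcost
  set l1 : (Fin n → ℝ) → ℝ := fun y => ∑ i, |y i - d i| with hl1
  have hcostcont : Continuous cost :=
    continuous_finset_sum _ fun i _ => continuous_const.mul (continuous_apply i)
  have hl1cont : Continuous l1 :=
    continuous_finset_sum _ fun i _ => ((continuous_apply i).sub continuous_const).abs
  have hWclosed : IsClosed (W : Set (Fin n → ℝ)) := W.closed_of_finiteDimensional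
  set Q : Set (Fin n → ℝ) := {y | (y - d ∈ W ∧ ∀ i, 0 ≤ y i) ∧ cost y ≤ cost x} with hQ
  have hQclosed : IsClosed Q := by
    have h1 : IsClosed {y : Fin n → ℝ | y - d ∈ W} :=
      hWclosed.preimage (continuous_id.sub continuous_const)
    have h2 : IsClosed {y : Fin n → ℝ | ∀ i, 0 ≤ y i} := by
      have : {y : Fin n → ℝ | ∀ i, 0 ≤ y i} = ⋂ i, {y | 0 ≤ y i} := by
        ext y; simp [Set.mem_iInter]
      rw [this]
      exact isClosed_iInter fun i => isClosed_le continuous_const (continuous_apply i)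
    have h3 : IsClosed {y : Fin n → ℝ | cost y ≤ cost x} :=
      isClosed_le hcostcont continuous_const
    have : Q = ({y : Fin n → ℝ | y - d ∈ W} ∩ {y | ∀ i, 0 ≤ y i}) ∩
        {y | cost y ≤ cost x} := by
      ext y; simp [hQ, Set.mem_setOf_eq, and_assoc]
    rw [this]
    exact ((h1.inter h2).inter h3)
  set K : Set (Fin n → ℝ) := Q ∩ {y | l1 y ≤ l1 x} with hK
  have hxQ : x ∈ Q := ⟨hx, le_refl _⟩
  have hxK : x ∈ K := ⟨hxQ, show l1 x ≤ l1 x from le_refl _⟩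
  have hKcompact : IsCompact K := by
    apply Metric.isCompact_of_isClosed_isBounded
    · exact hQclosed.inter (isClosed_le hl1cont continuous_const)
    · have hl1x : 0 ≤ l1 x := Finset.sum_nonneg fun i _ => abs_nonneg _
      apply Bornology.IsBounded.subset (Metric.isBounded_closedBall (x := d) (r := l1 x))
      intro y hy
      rw [Metric.mem_closedBall]
      rw [dist_pi_le_iff hl1x]
      intro i
      rw [Real.dist_eq]
      calc |y i - d i| ≤ l1 y :=
            Finset.single_le_sum (fun i _ => abs_nonneg (y i - d i)) (Finset.mem_univ i)
        _ ≤ l1 x := hy.2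
  obtain ⟨y, hyK, hymin⟩ := hKcompact.exists_isMinOn ⟨x, hxK⟩ hl1cont.continuousOn
  have hyQ : y ∈ Q := hyK.1
  have hminQ : ∀ w ∈ Q, l1 y ≤ l1 w := by
    intro w hw
    by_cases h : l1 w ≤ l1 x
    · exact hymin ⟨hw, h⟩
    · exact le_trans (hymin hxK) (le_of_not_ge h)
  set z : Fin n → ℝ := y - d with hz
  have hzW : z ∈ W := hyQ.1.1
  have hy0 : ∀ i, 0 ≤ y i := hyQ.1.2
  obtain ⟨m, h, hprops, hsum⟩ := conformal_decomposition_aux W _ z hzW rfl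
  have habs : ∀ i, ∑ l, |h l i| = |z i| := by
    intro i
    apply abs_sum_conformal (fun l => h l i) (z i) (fun l hl => (hprops l).2 i hl)
    rw [← hsum]
    exact (Finset.sum_apply i Finset.univ h).symm
  have habs_le : ∀ l i, |h l i| ≤ |z i| := by
    intro l i
    rw [← habs i]
    exact Finset.single_le_sum (fun l' _ => abs_nonneg (h l' i)) (Finset.mem_univ l)
  -- main claim per piece
  have Cl : ∀ l : Fin m, (∃ j, y j = 0 ∧ 0 < h l j) ∨ (∃ j, 0 < c j ∧ h l j < 0) := by
    intro l
    by_contra hcon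
    push_neg at hcon
    obtain ⟨hA, hB⟩ := hcon
    -- choose epsilon
    set G : Finset (Fin n) := Finset.univ.filter fun j => 0 < h l j with hG
    have hyG : ∀ j ∈ G, 0 < y j := by
      intro j hj
      have hj' : 0 < h l j := (Finset.mem_filter.1 hj).2
      rcases lt_or_eq_of_le (hy0 j) with hy | hy
      · exact hy
      · exact absurd hj' (not_lt.2 (hA j hy.symm))
    set ε : ℝ := if hGne : G.Nonempty then min 1 (G.inf' hGne fun j => y j / h l j) else 1
      with hε
    have hε0 : 0 < ε := by
      rw [hε]
      split
      · next hGne =>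
          apply lt_min one_pos
          rw [Finset.lt_inf'_iff]
          intro j hj
          exact div_pos (hyG j hj) (Finset.mem_filter.1 hj).2
      · exact one_pos
    have hε1 : ε ≤ 1 := by
      rw [hε]; split
      · exact min_le_left _ _
      · exact le_refl 1
    have hfeas' : ∀ j, 0 ≤ y j - ε * h l j := by
      intro j
      by_cases hj : 0 < h l j
      · have hjG : j ∈ G := by simp [hG, hj]
        have hGne : G.Nonempty := ⟨j, hjG⟩
        have hεle : ε ≤ y j / h l j := by
          rw [hε, dif_pos hGne]
          exact le_trans (min_le_right _ _) (Finset.inf'_le _ hjG)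
        have : ε * h l j ≤ y j := by
          rw [← le_div_iff₀ hj]
          exact hεle
        linarith
      · have : ε * h l j ≤ 0 := mul_nonpos_of_nonneg_of_nonpos (le_of_lt hε0) (not_lt.1 hj)
        have := hy0 j
        linarith
    set y' : Fin n → ℝ := y - ε • h l with hy'
    have hy'W : y' - d ∈ W := by
      have : y' - d = z - ε • h l := by
        rw [hy', hz]; ext i; simp; ring
      rw [this]
      exact W.sub_mem hzW (W.smul_mem ε (hprops l).1.1)
    have hch : 0 ≤ ∑ i, c i * h l i := by
      apply Finset.sum_nonneg
      intro i _
      by_cases hi : 0 ≤ h l i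
      · exact mul_nonneg (hc i) hi
      · have : c i = 0 := by
          by_contra hci
          have : 0 < c i := lt_of_le_of_ne (hc i) (Ne.symm hci)
          exact hi (hB i this)
        simp [this]
    have hy'cost : cost y' ≤ cost x := by
      have : cost y' = cost y - ε * ∑ i, c i * h l i := by
        simp only [hcost, hy', Pi.sub_apply, Pi.smul_apply, smul_eq_mul]
        rw [Finset.mul_sum, ← Finset.sum_sub_distrib]
        exact Finset.sum_congr rfl fun i _ => by ring
      rw [this]
      have := hyQ.2
      nlinarith
    have hy'Q : y' ∈ Q := ⟨⟨hy'W, hfeas'⟩, hy'cost⟩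
    have hl1y' : l1 y' < l1 y := by
      have heq : ∀ i, |y' i - d i| = |z i| - ε * |h l i| := by
        intro i
        have : y' i - d i = z i - ε * h l i := by
          simp [hy', hz]; ring
        rw [this]
        exact abs_sub_eps (fun hne => (hprops l).2 i hne) (habs_le l i) hε0 hε1
      have hsum' : l1 y' = l1 y - ε * ∑ i, |h l i| := by
        simp only [hl1]
        rw [Finset.sum_congr rfl fun i _ => heq i, Finset.sum_sub_distrib, ← Finset.mul_sum]
        congr 1
      have hpos : 0 < ∑ i, |h l i| := by
        obtain ⟨i₀, hi₀⟩ := Function.ne_iff.1 (hprops l).1.2.1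
        apply Finset.sum_pos' (fun i _ => abs_nonneg _)
        exact ⟨i₀, Finset.mem_univ i₀, abs_pos.2 (by simpa using hi₀)⟩
      rw [hsum']
      nlinarith
    have := hminQ y' hy'Q
    linarith
  -- choose witnesses
  have Pj : ∀ l : Fin m, ∃ j, (d j < 0 ∨ 0 < c j) ∧ |z j| ≤ |d j| ∧ h l j ≠ 0 := by
    intro l
    rcases Cl l with ⟨j, hyj, hhj⟩ | ⟨j, hcj, hhj⟩
    · have hzj : 0 < z j := by
        have := (hprops l).2 j (ne_of_gt hhj)
        nlinarith
      have hdj : d j = -z j := by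
        have : z j = y j - d j := rfl
        rw [hyj] at this
        linarith
      refine ⟨j, Or.inl (by rw [hdj]; linarith), ?_, ne_of_gt hhj⟩
      rw [hdj, abs_neg]
    · have hzj : z j < 0 := by
        have := (hprops l).2 j (ne_of_lt hhj)
        nlinarith
      have hdj : 0 < d j := by
        have hzd : z j = y j - d j := rfl
        have := hy0 j
        linarith
      refine ⟨j, Or.inr hcj, ?_, ne_of_lt hhj⟩
      rw [abs_of_neg hzj, abs_of_pos hdj]
      have hzd : z j = y j - d j := rfl
      have := hy0 j
      linarith
  choose j hjΛ hjz hjne using Pj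
  set Λ : Finset (Fin n) := Finset.univ.filter (fun i => d i < 0 ∨ 0 < c i) with hΛ
  have hjmem : ∀ l, j l ∈ Λ := by
    intro l
    simp [hΛ, hjΛ l]
  have hbound : ∀ i, |y i - d i| ≤ kappa W * ∑ p ∈ Λ, |d p| := by
    intro i
    have h1 : |z i| = ∑ l, |h l i| := (habs i).symm
    have h2 : ∑ l, |h l i| ≤ ∑ l, kappa W * |h l (j l)| := by
      apply Finset.sum_le_sum
      intro l _
      by_cases hli : h l i = 0
      · rw [hli, abs_zero]
        exact mul_nonneg (kappa_nonneg W) (abs_nonneg _)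
      · exact abs_le_kappa_mul (hprops l).1 (hjne l) hli
    have h3 : ∑ l, kappa W * |h l (j l)| = kappa W * ∑ l, |h l (j l)| :=
      (Finset.mul_sum _ _ _).symm
    have h4 : ∑ l, |h l (j l)| ≤ ∑ p ∈ Λ, |d p| := by
      have step : ∀ l : Fin m, |h l (j l)| = ∑ p ∈ Λ, if p = j l then |h l p| else 0 := by
        intro l
        rw [Finset.sum_ite_eq' Λ (j l) (fun p => |h l p|), if_pos (hjmem l)]
      rw [Finset.sum_congr rfl fun l _ => step l, Finset.sum_comm]
      apply Finset.sum_le_sum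
      intro p hp
      by_cases hpl : ∃ l, j l = p
      · obtain ⟨l₀, hl₀⟩ := hpl
        calc (∑ l, if p = j l then |h l p| else 0) ≤ ∑ l, |h l p| := by
              apply Finset.sum_le_sum
              intro l _
              split
              · exact le_refl _
              · exact abs_nonneg _
          _ = |z p| := habs p
          _ ≤ |d p| := hl₀ ▸ hjz l₀
      · have : ∀ l : Fin m, (if p = j l then |h l p| else 0) = 0 := by
          intro l
          rw [if_neg]
          intro hcon
          exact hpl ⟨l, hcon.symm⟩
        rw [Finset.sum_congr rfl fun l _ => this l]
        simp [abs_nonneg]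
    have hyzi : |y i - d i| = |z i| := rfl
    rw [hyzi, h1]
    calc ∑ l, |h l i| ≤ kappa W * ∑ l, |h l (j l)| := by rw [← h3]; exact h2
      _ ≤ kappa W * ∑ p ∈ Λ, |d p| :=
          mul_le_mul_of_nonneg_left h4 (kappa_nonneg W)
  exact ⟨y, hyQ.1, hyQ.2, hbound⟩

end Pulling
/-- Hoffman-type optimality proximity: for `c ≥ 0`, a feasible and bounded
LP `min ⟨c,x⟩, x ∈ W + d, x ≥ 0` has an optimal solution with
`‖x − d‖_∞ ≤ κ_W · ‖d_{Λ(d,c)}‖_1`, where `Λ(d,c) = supp(d⁻) ∪ supp(c⁺)`. -/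
theorem hoffman_optimality {n : ℕ} (W : Submodule ℝ (Fin n → ℝ)) (d c : Fin n → ℝ)
    (hc : ∀ i, 0 ≤ c i)
    (hfeas : ∃ x : Fin n → ℝ, x - d ∈ W ∧ ∀ i, 0 ≤ x i)
    (hbdd : ∃ L : ℝ, ∀ x : Fin n → ℝ, (x - d ∈ W ∧ ∀ i, 0 ≤ x i) →
      L ≤ ∑ i, c i * x i) :
    ∃ x : Fin n → ℝ, (x - d ∈ W ∧ ∀ i, 0 ≤ x i) ∧
      (∀ x' : Fin n → ℝ, (x' - d ∈ W ∧ ∀ i, 0 ≤ x' i) →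
        ∑ i, c i * x i ≤ ∑ i, c i * x' i) ∧
      ∀ i, |x i - d i| ≤
        kappa W * ∑ i ∈ Finset.univ.filter (fun i => d i < 0 ∨ 0 < c i), |d i| := by
  classical
  set R : ℝ := kappa W * ∑ i ∈ Finset.univ.filter (fun i => d i < 0 ∨ 0 < c i), |d i|
    with hR
  have hR0 : 0 ≤ R :=
    mul_nonneg (kappa_nonneg W) (Finset.sum_nonneg fun i _ => abs_nonneg _)
  set cost : (Fin n → ℝ) → ℝ := fun y => ∑ i, c i * y i with hcost
  have hcostcont : Continuous cost :=
    continuous_finset_sum _ fun i _ => continuous_const.mul (continuous_apply i)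
  have hWclosed : IsClosed (W : Set (Fin n → ℝ)) := W.closed_of_finiteDimensional
  set K : Set (Fin n → ℝ) :=
    {x | (x - d ∈ W ∧ ∀ i, 0 ≤ x i) ∧ ∀ i, |x i - d i| ≤ R} with hKdef
  obtain ⟨x₀, hx₀⟩ := hfeas
  obtain ⟨y₀, hy₀feas, _, hy₀bd⟩ := pulling W d c hc x₀ hx₀
  have hy₀K : y₀ ∈ K := ⟨hy₀feas, hy₀bd⟩
  have hKcompact : IsCompact K := by
    apply Metric.isCompact_of_isClosed_isBounded
    · have h1 : IsClosed {x : Fin n → ℝ | x - d ∈ W} :=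
        hWclosed.preimage (continuous_id.sub continuous_const)
      have h2 : IsClosed {x : Fin n → ℝ | ∀ i, 0 ≤ x i} := by
        have : {x : Fin n → ℝ | ∀ i, 0 ≤ x i} = ⋂ i, {x | 0 ≤ x i} := by
          ext y; simp [Set.mem_iInter]
        rw [this]
        exact isClosed_iInter fun i => isClosed_le continuous_const (continuous_apply i)
      have h3 : IsClosed {x : Fin n → ℝ | ∀ i, |x i - d i| ≤ R} := by
        have : {x : Fin n → ℝ | ∀ i, |x i - d i| ≤ R} = ⋂ i, {x | |x i - d i| ≤ R} := by
          ext y; simp [Set.mem_iInter]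
        rw [this]
        exact isClosed_iInter fun i =>
          isClosed_le ((continuous_apply i).sub continuous_const).abs continuous_const
      have : K = ({x : Fin n → ℝ | x - d ∈ W} ∩ {x | ∀ i, 0 ≤ x i}) ∩
          {x | ∀ i, |x i - d i| ≤ R} := by
        ext y; simp [hKdef, Set.mem_setOf_eq, and_assoc]
      rw [this]
      exact (h1.inter h2).inter h3
    · apply Bornology.IsBounded.subset (Metric.isBounded_closedBall (x := d) (r := R))
      intro y hy
      rw [Metric.mem_closedBall, dist_pi_le_iff hR0]
      intro i
      rw [Real.dist_eq]
      exact hy.2 i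
  obtain ⟨xstar, hxK, hxmin⟩ :=
    hKcompact.exists_isMinOn ⟨y₀, hy₀K⟩ hcostcont.continuousOn
  refine ⟨xstar, hxK.1, ?_, hxK.2⟩
  intro x' hx'
  obtain ⟨y', hy'feas, hy'cost, hy'bd⟩ := pulling W d c hc x' hx'
  have hy'K : y' ∈ K := ⟨hy'feas, hy'bd⟩
  exact le_trans (hxmin hy'K) hy'cost
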